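/- Let ex, ey, csi ∈ ℝ with csi² = 48·ex, and set G₂ = 12·(13·ex² + 16·ey²), G₃ = 8·(35·ex² + 48·ey²)·ex. (i) For k ∈ {0,1}, the pair (w_k, v_k) with w_k = −2·ex + (−1)^k·i·√3·(3·ex + 4i·ey) and v_k = (3 − (−1)^k·i·√3)·csi·(3·ex + 4i·ey)/2 satisfies v_k² = 4·w_k³ − G₂·w_k − G₃. (ii) Moreover, if ℘ is holomorphic on a connected open set U with (℘')² = 4·℘³ − G₂·℘ − G₃, nonconstant, and ξ* ∈ U satisfies ℘(ξ*) = w₀ and ℘'(ξ*) = v₀, then the function D = csi/2 − [6·csi·(3·ex + 4i·ey)² + (℘ + 2·ex + 3·(3·ex + 4i·ey))·℘'] / [2·((℘ + 2·ex)² + 3·(3·ex + 4i·ey)²)] has a simple pole at ξ* with residue (−1 + i·√3)/2. -/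

import Mathlib

set_option maxHeartbeats 1000000


open Filter Topology

private lemma analyticAt_deriv' {f : ℂ → ℂ} {x : ℂ} (h : AnalyticAt ℂ f x) :
    AnalyticAt ℂ (deriv f) x := by
  obtain ⟨s, hs, h2⟩ := h.eventually_analyticAt.exists_mem
  exact (AnalyticOnNhd.deriv (fun y hy => h2 y hy)) x (mem_of_mem_nhds hs)

/-- factorization of an analytic function with a zero, together with its derivative -/
private lemma fact_deriv' {w : ℂ → ℂ} {ξ w₀ : ℂ} (hw : AnalyticAt ℂ w ξ) (hw0 : w ξ = w₀)
    (hne : ¬ ∀ᶠ z in 𝓝 ξ, w z - w₀ = 0) :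
    ∃ n : ℕ, 1 ≤ n ∧ ∃ g : ℂ → ℂ, AnalyticAt ℂ g ξ ∧ g ξ ≠ 0 ∧
      (∀ᶠ z in 𝓝 ξ, w z - w₀ = (z - ξ)^n * g z) ∧
      (∀ᶠ z in 𝓝 ξ, deriv w z = (z - ξ)^(n-1) * ((n : ℂ) * g z + (z - ξ) * deriv g z)) := by
  have hf : AnalyticAt ℂ (fun z => w z - w₀) ξ := hw.sub analyticAt_const
  obtain ⟨n, g, hg, hgne, hfe⟩ := hf.exists_eventuallyEq_pow_smul_nonzero_iff.mpr hne
  simp only [smul_eq_mul] at hfe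
  have hn1 : 1 ≤ n := by
    rcases Nat.eq_zero_or_pos n with h0 | h1
    · exfalso
      have := hfe.self_of_nhds
      rw [h0, pow_zero, one_mul, hw0, sub_self] at this
      exact hgne this.symm
    · exact h1
  refine ⟨n, hn1, g, hg, hgne, hfe, ?_⟩
  have hd1 : deriv (fun z => w z - w₀) =ᶠ[𝓝 ξ] deriv (fun z => (z - ξ)^n * g z) :=
    Filter.EventuallyEq.deriv hfe
  filter_upwards [hd1, hg.eventually_analyticAt] with z hz hgz
  have hder : HasDerivAt (fun z => (z - ξ)^n * g z)
      ((n : ℂ) * (z - ξ)^(n-1) * 1 * g z + (z - ξ)^n * deriv g z) z := by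
    exact (((hasDerivAt_id z).sub_const ξ).pow n).mul hgz.differentiableAt.hasDerivAt
  have h2 : deriv w z = (n : ℂ) * (z - ξ)^(n-1) * 1 * g z + (z - ξ)^n * deriv g z := by
    have : deriv (fun z => w z - w₀) z = deriv w z := by
      simp [deriv_sub_const]
    rw [← this, hz, hder.deriv]
  rw [h2]
  have hpow : (z - ξ)^n = (z - ξ)^(n-1) * (z - ξ) := by
    rw [← pow_succ]
    congr 1
    omega
  rw [hpow]; ring

/-- affix values `℘(ξ^ψ_{j,k})` at the poles of `dlogA` (with `j = i`). -/
noncomputable def wPole (ex ey : ℝ) (k : ℕ) : ℂ :=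
  -2 * (ex : ℂ) + (-1)^k * Complex.I * (Real.sqrt 3 : ℂ) * (3 * (ex : ℂ) + 4 * Complex.I * (ey : ℂ))

/-- values `℘'(ξ^ψ_{j,k})` at the poles of `dlogA` (with `j = i`). -/
noncomputable def vPole (ex ey csi : ℝ) (k : ℕ) : ℂ :=
  (3 - (-1)^k * Complex.I * (Real.sqrt 3 : ℂ)) * (csi : ℂ)
    * (3 * (ex : ℂ) + 4 * Complex.I * (ey : ℂ)) / 2

/-- (i) The pairs `(w_k, v_k)`, `k = 0, 1`, lie on the cubic `v² = 4w³ − G₂ w − G₃`;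
(ii) at a point `ξ*` where `(℘, ℘') = (w₀, v₀)`, the function `D` (the closed form of
`dlogA`) has a simple pole with residue `(−1 + i√3)/2`. -/
theorem cgl5_dlogA_poles_and_residue
    (ex ey csi : ℝ) (hcsi : csi^2 = 48 * ex)
    (G₂ G₃ : ℝ)
    (hG₂ : G₂ = 12 * (13 * ex^2 + 16 * ey^2))
    (hG₃ : G₃ = 8 * (35 * ex^2 + 48 * ey^2) * ex) :
    (∀ k : ℕ, k ≤ 1 →
      (vPole ex ey csi k)^2
        = 4 * (wPole ex ey k)^3 - (G₂ : ℂ) * wPole ex ey k - (G₃ : ℂ))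
    ∧ (∀ (U : Set ℂ), IsOpen U → IsConnected U →
       ∀ ℘ : ℂ → ℂ, (∀ z ∈ U, AnalyticAt ℂ ℘ z) →
       (∀ z ∈ U, (deriv ℘ z)^2 = 4 * (℘ z)^3 - (G₂ : ℂ) * ℘ z - (G₃ : ℂ)) →
       (¬ ∀ z ∈ U, ∀ w ∈ U, ℘ z = ℘ w) →
       ∀ ξs ∈ U, ℘ ξs = wPole ex ey 0 → deriv ℘ ξs = vPole ex ey csi 0 →
       ∀ D : ℂ → ℂ,
         (D = fun z => (csi : ℂ) / 2 -
           (6 * (csi : ℂ) * (3 * (ex : ℂ) + 4 * Complex.I * (ey : ℂ))^2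
             + (℘ z + 2 * (ex : ℂ) + 3 * (3 * (ex : ℂ) + 4 * Complex.I * (ey : ℂ)))
                * deriv ℘ z)
           / (2 * ((℘ z + 2 * (ex : ℂ))^2
                + 3 * (3 * (ex : ℂ) + 4 * Complex.I * (ey : ℂ))^2))) →
         Tendsto (fun z => (z - ξs) * D z) (𝓝[≠] ξs)
           (𝓝 ((-1 + Complex.I * (Real.sqrt 3 : ℂ)) / 2))) := by
  refine ⟨?_, ?_⟩
  · intro k hk
    simp only [wPole, vPole]
    have hs : ((Real.sqrt 3 : ℝ) : ℂ)^2 = 3 := by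
      norm_cast
      exact_mod_cast Real.sq_sqrt (by norm_num : (0:ℝ) ≤ 3)
    have hI : Complex.I^2 = -1 := Complex.I_sq
    have hc : (csi:ℂ)^2 = 48 * (ex:ℂ) := by exact_mod_cast congrArg (Complex.ofReal) hcsi
    set s := ((Real.sqrt 3 : ℝ) : ℂ) with hsdef
    subst hG₂ hG₃
    interval_cases k
    · simp only [pow_zero, one_mul]
      push_cast
      linear_combination ((36)*(csi:ℂ)^2*(ey:ℂ)^2 + (768)*s*(ey:ℂ)^3 + (432)*s*(ex:ℂ)^2*(ey:ℂ) + (-36)*s*(csi:ℂ)^2*(ex:ℂ)*(ey:ℂ) + (-24)*s*Complex.I*(csi:ℂ)^2*(ey:ℂ)^2 + (-384)*s^2*(ex:ℂ)*(ey:ℂ)^2 + (216)*s^2*(ex:ℂ)^3 + (-4)*s^2*(csi:ℂ)^2*(ey:ℂ)^2 + ((9)/4)*s^2*(csi:ℂ)^2*(ex:ℂ)^2 + (576)*s^2*Complex.I*(ex:ℂ)^2*(ey:ℂ) + (6)*s^2*Complex.I*(csi:ℂ)^2*(ex:ℂ)*(ey:ℂ) + (384)*s^2*Complex.I^2*(ex:ℂ)*(ey:ℂ)^2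 + (4)*s^2*Complex.I^2*(csi:ℂ)^2*(ey:ℂ)^2 + (-256)*s^3*(ey:ℂ)^3 + (432)*s^3*(ex:ℂ)^2*(ey:ℂ) + (576)*s^3*Complex.I*(ex:ℂ)*(ey:ℂ)^2 + (-108)*s^3*Complex.I*(ex:ℂ)^3 + (256)*s^3*Complex.I^2*(ey:ℂ)^3 + (-432)*s^3*Complex.I^2*(ex:ℂ)^2*(ey:ℂ) + (-576)*s^3*Complex.I^3*(ex:ℂ)*(ey:ℂ)^2 + (-256)*s^3*Complex.I^4*(ey:ℂ)^3) * hI + ((384)*(ex:ℂ)*(ey:ℂ)^2 + (-216)*(ex:ℂ)^3 + (4)*(csi:ℂ)^2*(ey:ℂ)^2 + ((-9)/4)*(csi:ℂ)^2*(ex:ℂ)^2 + (-576)*Complex.I*(ex:ℂ)^2*(ey:ℂ) + (-6)*Complex.I*(csi:ℂ)^2*(ex:ℂ)*(ey:ℂ) + (256)*s*(ey:ℂ)^3 + (-432)*s*(ex:ℂ)^2*(ey:ℂ) + (-576)*s*Complex.I*(ex:ℂ)*(ey:ℂ)^2 + (108)*s*Complex.I*(ex:ℂ)^3) * hs + ((-24)*(ey:ℂ)^2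 + ((27)/2)*(ex:ℂ)^2 + (36)*Complex.I*(ex:ℂ)*(ey:ℂ) + (36)*s*(ex:ℂ)*(ey:ℂ) + (24)*s*Complex.I*(ey:ℂ)^2 + ((-27)/2)*s*Complex.I*(ex:ℂ)^2) * hc
    · simp only [pow_one]
      push_cast
      linear_combination ((36)*(csi:ℂ)^2*(ey:ℂ)^2 + (-768)*s*(ey:ℂ)^3 + (-432)*s*(ex:ℂ)^2*(ey:ℂ) + (36)*s*(csi:ℂ)^2*(ex:ℂ)*(ey:ℂ) + (24)*s*Complex.I*(csi:ℂ)^2*(ey:ℂ)^2 + (-384)*s^2*(ex:ℂ)*(ey:ℂ)^2 + (216)*s^2*(ex:ℂ)^3 + (-4)*s^2*(csi:ℂ)^2*(ey:ℂ)^2 + ((9)/4)*s^2*(csi:ℂ)^2*(ex:ℂ)^2 + (576)*s^2*Complex.I*(ex:ℂ)^2*(ey:ℂ) + (6)*s^2*Complex.I*(csi:ℂ)^2*(ex:ℂ)*(ey:ℂ) + (384)*s^2*Complex.I^2*(ex:ℂ)*(ey:ℂ)^2 + (4)*s^2*Complex.I^2*(csi:ℂ)^2*(ey:ℂ)^2 +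 (256)*s^3*(ey:ℂ)^3 + (-432)*s^3*(ex:ℂ)^2*(ey:ℂ) + (-576)*s^3*Complex.I*(ex:ℂ)*(ey:ℂ)^2 + (108)*s^3*Complex.I*(ex:ℂ)^3 + (-256)*s^3*Complex.I^2*(ey:ℂ)^3 + (432)*s^3*Complex.I^2*(ex:ℂ)^2*(ey:ℂ) + (576)*s^3*Complex.I^3*(ex:ℂ)*(ey:ℂ)^2 + (256)*s^3*Complex.I^4*(ey:ℂ)^3) * hI + ((384)*(ex:ℂ)*(ey:ℂ)^2 + (-216)*(ex:ℂ)^3 + (4)*(csi:ℂ)^2*(ey:ℂ)^2 + ((-9)/4)*(csi:ℂ)^2*(ex:ℂ)^2 + (-576)*Complex.I*(ex:ℂ)^2*(ey:ℂ) + (-6)*Complex.I*(csi:ℂ)^2*(ex:ℂ)*(ey:ℂ) + (-256)*s*(ey:ℂ)^3 + (432)*s*(ex:ℂ)^2*(ey:ℂ) + (576)*s*Complex.I*(ex:ℂ)*(ey:ℂ)^2 + (-108)*s*Complex.I*(ex:ℂ)^3) * hs + ((-24)*(ey:ℂ)^2 + ((27)/2)*(ex:ℂ)^2 + (36)*Complex.I*(ex:ℂ)*(ey:ℂ)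 + (-36)*s*(ex:ℂ)*(ey:ℂ) + (-24)*s*Complex.I*(ey:ℂ)^2 + ((27)/2)*s*Complex.I*(ex:ℂ)^2) * hc
  · intro U hUo hUc w hana hcurve hnc ξ hξ hw0 hv0 D hD
    simp only [wPole, vPole] at hw0 hv0
    subst hD
    have hs : ((Real.sqrt 3 : ℝ) : ℂ)^2 = 3 := by
      norm_cast
      exact_mod_cast Real.sq_sqrt (by norm_num : (0:ℝ) ≤ 3)
    have hI : Complex.I^2 = -1 := Complex.I_sq
    have hc : (csi:ℂ)^2 = 48 * (ex:ℂ) := by exact_mod_cast congrArg (Complex.ofReal) hcsi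
    set s : ℂ := ((Real.sqrt 3 : ℝ) : ℂ) with hsdef
    set a : ℂ := 3 * (ex : ℂ) + 4 * Complex.I * (ey : ℂ) with hadef
    set w0 : ℂ := -2 * (ex:ℂ) + Complex.I * s * a with hw0def
    set w1 : ℂ := -2 * (ex:ℂ) - Complex.I * s * a with hw1def
    set v0 : ℂ := (3 - Complex.I * s) * (csi:ℂ) * a / 2 with hv0def
    have hsne : s ≠ 0 := by
      intro h; rw [h] at hs; norm_num at hs
    have hw0' : w ξ = w0 := by rw [hw0]; rw [hw0def]; ring
    have hv0' : deriv w ξ = v0 := by rw [hv0]; rw [hv0def]; ring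
    have hDen : ∀ x : ℂ, (x + 2*(ex:ℂ))^2 + 3*a^2 = (x - w0) * (x - w1) := by
      intro x
      rw [hw0def, hw1def]
      linear_combination (a^2*s^2) * hI - a^2 * hs
    have hana' : AnalyticAt ℂ w ξ := hana ξ hξ
    have hcw : ContinuousAt w ξ := hana'.continuousAt
    have hcd : ContinuousAt (deriv w) ξ := (analyticAt_deriv' hana').continuousAt
    have hw01 : w0 - w1 = 2 * Complex.I * s * a := by rw [hw0def, hw1def]; ring
    rcases eq_or_ne csi 0 with hcs | hcs
    ·
      -- degenerate case csi = 0 (hence ex = 0)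
      have hex0 : ex = 0 := by nlinarith [hcsi]
      have hc0 : (csi:ℂ) = 0 := by rw [hcs]; norm_num
      have he0 : (ex:ℂ) = 0 := by rw [hex0]; norm_num
      have hNEV : ¬ ∀ᶠ z in 𝓝 ξ, w z - w0 = 0 := by
        intro hev
        apply hnc
        have hev' : w =ᶠ[𝓝 ξ] (fun _ => w0) := by
          filter_upwards [hev] with z hz
          exact sub_eq_zero.mp hz
        have heq : Set.EqOn w (fun _ => w0) U :=
          AnalyticOnNhd.eqOn_of_preconnected_of_eventuallyEq hana
            (fun z hz => analyticAt_const) hUc.isPreconnected hξ hev'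
        intro z hz z' hz'
        rw [heq hz, heq hz']
      obtain ⟨n, hn1, g, hg, hgne, hfe, hde⟩ := fact_deriv' hana' hw0' hNEV
      obtain ⟨m, rfl⟩ : ∃ m, n = m + 1 := ⟨n - 1, by omega⟩
      simp only [Nat.add_sub_cancel] at hde
      push_cast at hde
      have hgc : ContinuousAt g ξ := hg.continuousAt
      have hgd : ContinuousAt (deriv g) ξ := (analyticAt_deriv' hg).continuousAt
      have hgev : ∀ᶠ z in 𝓝 ξ, g z ≠ 0 := hgc.tendsto.eventually_ne hgne
      have hUev : ∀ᶠ z in 𝓝 ξ, z ∈ U := hUo.mem_nhds hξ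
      rcases eq_or_ne ey 0 with hey | hey
      · -- fully degenerate : contradiction with nonconstancy
        exfalso
        have hy0 : (ey:ℂ) = 0 := by rw [hey]; norm_num
        have hw00 : w0 = 0 := by rw [hw0def, hadef, he0, hy0]; ring
        have hG20 : (G₂:ℂ) = 0 := by rw [hG₂, hex0, hey]; norm_num
        have hG30 : (G₃:ℂ) = 0 := by rw [hG₃, hex0, hey]; norm_num
        have hkey : ∀ᶠ z in 𝓝[≠] ξ,
            (((m:ℂ)+1) * g z + (z-ξ) * deriv g z)^2 = (z-ξ)^(m+3) * (4 * g z^3) := by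
          filter_upwards [hfe.filter_mono nhdsWithin_le_nhds, hde.filter_mono nhdsWithin_le_nhds,
            hUev.filter_mono nhdsWithin_le_nhds, self_mem_nhdsWithin] with z hfz hdz hzU hzne
          have ht : (z - ξ) ≠ 0 := sub_ne_zero.mpr hzne
          have hcv := hcurve z hzU
          rw [hdz] at hcv
          have hwz : w z = (z-ξ)^(m+1) * g z := by
            have h2 := hfz
            rw [hw00, sub_zero] at h2
            exact h2
          apply mul_left_cancel₀ (pow_ne_zero (2*m) ht)
          calc (z-ξ)^(2*m) * (((m:ℂ)+1) * g z + (z-ξ) * deriv g z)^2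
              = ((z-ξ)^m * (((m:ℂ)+1) * g z + (z-ξ) * deriv g z))^2 := by ring
            _ = 4 * w z^3 - (G₂:ℂ) * w z - (G₃:ℂ) := hcv
            _ = (z-ξ)^(2*m) * ((z-ξ)^(m+3) * (4 * g z^3)) := by
                rw [hwz, hG20, hG30]; ring
        have hA : Tendsto (fun z => (((m:ℂ)+1) * g z + (z-ξ) * deriv g z)^2) (𝓝[≠] ξ)
            (𝓝 ((((m:ℂ)+1) * g ξ)^2)) := by
          have hca : ContinuousAt (fun z => (((m:ℂ)+1) * g z + (z-ξ) * deriv g z)^2) ξ :=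
            ((continuousAt_const.mul hgc).add
              ((continuousAt_id.sub continuousAt_const).mul hgd)).pow 2
          have h2 := hca.tendsto
          simp only [sub_self, zero_mul, add_zero] at h2
          exact h2.mono_left nhdsWithin_le_nhds
        have hB : Tendsto (fun z => (z-ξ)^(m+3) * (4 * g z^3)) (𝓝[≠] ξ) (𝓝 0) := by
          have hca : ContinuousAt (fun z => (z-ξ)^(m+3) * (4 * g z^3)) ξ :=
            (((continuousAt_id.sub continuousAt_const).pow _).mul
              (continuousAt_const.mul (hgc.pow 3)))
          have h2 := hca.tendsto
          simp only [sub_self, zero_pow (by omega : m+3 ≠ 0), zero_mul] at h2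
          exact h2.mono_left nhdsWithin_le_nhds
        have huniq := tendsto_nhds_unique (hA.congr' (by filter_upwards [hkey] with z h; rw [h])) hB
        have : ((m:ℂ)+1) * g ξ = 0 := by
          exact pow_eq_zero_iff (n := 2) (by norm_num) |>.mp huniq
        rcases mul_eq_zero.mp this with h | h
        · have hmne : ((m:ℂ)+1) ≠ 0 := by
            have h9 : ((m+1 : ℕ) : ℂ) ≠ 0 := Nat.cast_ne_zero.mpr (by omega)
            push_cast at h9
            exact h9
          exact hmne h
        · exact hgne h
      ·
        -- double pole case : ey ≠ 0, order n = 2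
        have hy : (ey:ℂ) ≠ 0 := by exact_mod_cast hey
        have haC : a ≠ 0 := by
          have h2 : a = 4 * Complex.I * (ey:ℂ) := by rw [hadef, he0]; ring
          rw [h2]
          exact mul_ne_zero (mul_ne_zero (by norm_num) Complex.I_ne_zero) hy
        have hw01ne : w0 - w1 ≠ 0 := by
          rw [hw01]
          exact mul_ne_zero (mul_ne_zero (mul_ne_zero two_ne_zero Complex.I_ne_zero) hsne) haC
        have hw0ne : w0 ≠ 0 := by
          have h2 : w0 = Complex.I * s * a := by rw [hw0def, he0]; ring
          rw [h2]
          exact mul_ne_zero (mul_ne_zero Complex.I_ne_zero hsne) haC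
        have hQ : ∀ x : ℂ, 4*x^3 - (G₂:ℂ)*x - (G₃:ℂ) = 4*x*(x-w0)*(x-w1) := by
          intro x
          rw [hG₂, hG₃, hw0def, hw1def, hadef]
          push_cast
          linear_combination ((-64)*s^2*(ey:ℂ)^2*x + (36)*s^2*(ex:ℂ)^2*x + (96)*s^2*Complex.I*(ex:ℂ)*(ey:ℂ)*x + (64)*s^2*Complex.I^2*(ey:ℂ)^2*x) * hI + ((64)*(ey:ℂ)^2*x + (-36)*(ex:ℂ)^2*x + (-96)*Complex.I*(ex:ℂ)*(ey:ℂ)*x) * hs + ((-16)*x^2 + (-384)*(ey:ℂ)^2 + (-280)*(ex:ℂ)*x + (-280)*(ex:ℂ)^2 + (-288)*Complex.I*(ey:ℂ)*x) * he0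
        have hkey : ∀ᶠ z in 𝓝[≠] ξ, (z-ξ)^(2*m) * (((m:ℂ)+1) * g z + (z-ξ) * deriv g z)^2
            = (z-ξ)^(m+1) * (4 * w z * g z * (w z - w1)) := by
          filter_upwards [hfe.filter_mono nhdsWithin_le_nhds, hde.filter_mono nhdsWithin_le_nhds,
            hUev.filter_mono nhdsWithin_le_nhds] with z hfz hdz hzU
          have hcv := hcurve z hzU
          rw [hdz, hQ (w z)] at hcv
          calc (z-ξ)^(2*m) * (((m:ℂ)+1) * g z + (z-ξ) * deriv g z)^2
              = ((z-ξ)^m * (((m:ℂ)+1) * g z + (z-ξ) * deriv g z))^2 := by ring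
            _ = 4 * w z * (w z - w0) * (w z - w1) := hcv
            _ = (z-ξ)^(m+1) * (4 * w z * g z * (w z - w1)) := by rw [hfz]; ring
        have hXc : ContinuousAt (fun z => (((m:ℂ)+1) * g z + (z-ξ) * deriv g z)^2) ξ :=
          ((continuousAt_const.mul hgc).add
            ((continuousAt_id.sub continuousAt_const).mul hgd)).pow 2
        have hX : Tendsto (fun z => (((m:ℂ)+1) * g z + (z-ξ) * deriv g z)^2) (𝓝[≠] ξ)
            (𝓝 ((((m:ℂ)+1) * g ξ)^2)) := by
          have h2 := hXc.tendsto
          simp only [sub_self, zero_mul, add_zero] at h2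
          exact h2.mono_left nhdsWithin_le_nhds
        have hXne : (((m:ℂ)+1) * g ξ)^2 ≠ 0 := by
          apply pow_ne_zero
          apply mul_ne_zero _ hgne
          have h9 : ((m+1 : ℕ) : ℂ) ≠ 0 := Nat.cast_ne_zero.mpr (by omega)
          push_cast at h9
          exact h9
        have hBc : ContinuousAt (fun z => 4 * w z * g z * (w z - w1)) ξ :=
          ((continuousAt_const.mul hcw).mul hgc).mul (hcw.sub continuousAt_const)
        have hBval : 4 * w ξ * g ξ * (w ξ - w1) ≠ 0 := by
          rw [hw0']
          exact mul_ne_zero (mul_ne_zero (mul_ne_zero (by norm_num) hw0ne) hgne) hw01ne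
        have hm1 : m = 1 := by
          by_contra hm1
          rcases Nat.lt_or_ge m 2 with hlt | hge
          · -- m = 0 : simple zero, impossible
            have hm0 : m = 0 := by omega
            subst hm0
            have hkey1 : ∀ᶠ z in 𝓝[≠] ξ, ((((0:ℕ):ℂ)+1) * g z + (z-ξ) * deriv g z)^2
                = (z-ξ)^(0+1) * (4 * w z * g z * (w z - w1)) := by
              filter_upwards [hkey] with z h
              rw [← h]
              norm_num
            have hB0 : Tendsto (fun z => (z-ξ)^(0+1) * (4 * w z * g z * (w z - w1)))
                (𝓝[≠] ξ) (𝓝 0) := by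
              have hca : ContinuousAt (fun z => (z-ξ)^(0+1) * (4 * w z * g z * (w z - w1))) ξ :=
                ((continuousAt_id.sub continuousAt_const).pow (0+1)).mul hBc
              have h2 := hca.tendsto
              simp only [sub_self, zero_pow (by norm_num : 0+1 ≠ 0), zero_mul] at h2
              exact h2.mono_left nhdsWithin_le_nhds
            exact hXne (tendsto_nhds_unique (hX.congr' hkey1) hB0)
          · -- m ≥ 2 : too high order, impossible
            have hkey2 : ∀ᶠ z in 𝓝[≠] ξ, 4 * w z * g z * (w z - w1)
                = (z-ξ)^(m-1) * (((m:ℂ)+1) * g z + (z-ξ) * deriv g z)^2 := by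
              filter_upwards [hkey, self_mem_nhdsWithin] with z h hzne
              have ht : z - ξ ≠ 0 := sub_ne_zero.mpr hzne
              apply mul_left_cancel₀ (pow_ne_zero (m+1) ht)
              have he2 : m + 1 + (m - 1) = 2*m := by omega
              conv_rhs => rw [← mul_assoc, ← pow_add, he2]
              exact h.symm
            have hB2 : Tendsto (fun z => (z-ξ)^(m-1)
                * (((m:ℂ)+1) * g z + (z-ξ) * deriv g z)^2) (𝓝[≠] ξ) (𝓝 0) := by
              have hca : ContinuousAt (fun z => (z-ξ)^(m-1)
                  * (((m:ℂ)+1) * g z + (z-ξ) * deriv g z)^2) ξ :=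
                ((continuousAt_id.sub continuousAt_const).pow (m-1)).mul hXc
              have h2 := hca.tendsto
              simp only [sub_self, zero_pow (by omega : m - 1 ≠ 0), zero_mul] at h2
              exact h2.mono_left nhdsWithin_le_nhds
            have hBlim : Tendsto (fun z => 4 * w z * g z * (w z - w1)) (𝓝[≠] ξ)
                (𝓝 (4 * w ξ * g ξ * (w ξ - w1))) := hBc.tendsto.mono_left nhdsWithin_le_nhds
            exact hBval (tendsto_nhds_unique (hBlim.congr' hkey2) hB2)
        subst hm1
        norm_num at hfe hde
        -- final computation of the limit
        have hwne1 : ∀ᶠ z in 𝓝[≠] ξ, w z - w1 ≠ 0 := by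
          have h2 : ∀ᶠ z in 𝓝 ξ, w z ≠ w1 :=
            hcw.tendsto.eventually_ne (show w ξ ≠ w1 by rw [hw0']; exact sub_ne_zero.mp hw01ne)
          filter_upwards [h2.filter_mono nhdsWithin_le_nhds] with z hz
          exact sub_ne_zero.mpr hz
        have hT2 : Tendsto (fun z => -((w z + 2*(ex:ℂ) + 3*a) * (2 * g z + (z-ξ) * deriv g z))
            / (2 * g z * (w z - w1))) (𝓝[≠] ξ)
            (𝓝 (-((w0 + 2*(ex:ℂ) + 3*a) * (2 * g ξ)) / (2 * g ξ * (w0 - w1)))) := by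
          have hnum : ContinuousAt (fun z => -((w z + 2*(ex:ℂ) + 3*a)
              * (2 * g z + (z-ξ) * deriv g z))) ξ :=
            (((hcw.add continuousAt_const).add continuousAt_const).mul
              ((continuousAt_const.mul hgc).add
                ((continuousAt_id.sub continuousAt_const).mul hgd))).neg
          have hden2 : ContinuousAt (fun z => 2 * g z * (w z - w1)) ξ :=
            (continuousAt_const.mul hgc).mul (hcw.sub continuousAt_const)
          have hdv : 2 * g ξ * (w ξ - w1) ≠ 0 := by
            rw [hw0']
            exact mul_ne_zero (mul_ne_zero two_ne_zero hgne) hw01ne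
          have h3 := (hnum.tendsto).div (hden2.tendsto) hdv
          simp only [sub_self, zero_mul, add_zero, mul_zero] at h3
          rw [hw0'] at h3
          exact h3.mono_left nhdsWithin_le_nhds
        have hval : -((w0 + 2*(ex:ℂ) + 3*a) * (2 * g ξ)) / (2 * g ξ * (w0 - w1))
            = (-1 + Complex.I * s) / 2 := by
          have hd1 : 2 * g ξ * (w0 - w1) ≠ 0 :=
            mul_ne_zero (mul_ne_zero two_ne_zero hgne) hw01ne
          rw [div_eq_div_iff hd1 two_ne_zero]
          rw [hw0def, hw1def, hadef]
          linear_combination ((-12)*s^2*(ex:ℂ)*(g ξ) + (-16)*s^2*Complex.I*(ey:ℂ)*(g ξ)) * hI + ((12)*(ex:ℂ)*(g ξ) + (16)*Complex.I*(ey:ℂ)*(g ξ)) * hs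
        rw [← hval]
        apply hT2.congr'
        filter_upwards [hfe.filter_mono nhdsWithin_le_nhds, hde.filter_mono nhdsWithin_le_nhds,
          hgev.filter_mono nhdsWithin_le_nhds, hwne1, self_mem_nhdsWithin] with z hfz hdz hgz h1 hzne
        have ht : z - ξ ≠ 0 := sub_ne_zero.mpr hzne
        symm
        simp only [hc0, zero_div, mul_zero, zero_mul, zero_add, zero_sub]
        rw [hDen (w z), hfz, hdz]
        field_simp


    · -- generic case : csi ≠ 0, v0 ≠ 0, simple pole
      have hex : (0:ℝ) < ex := by
        have h1 : 0 < csi^2 := by positivity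
        nlinarith
      have ha : a ≠ 0 := by
        rw [hadef]
        intro h
        rw [Complex.ext_iff] at h
        simp [Complex.add_re, Complex.mul_re, Complex.I_re, Complex.I_im] at h
        nlinarith [h.1]
      have h3Is : (3:ℂ) - Complex.I * s ≠ 0 := by
        intro h
        rw [Complex.ext_iff] at h
        simp [Complex.sub_re, Complex.mul_re, Complex.I_re, Complex.I_im, hsdef] at h
      have hcsC : (csi:ℂ) ≠ 0 := by exact_mod_cast hcs
      have hv0ne : v0 ≠ 0 := by
        rw [hv0def]
        apply div_ne_zero _ two_ne_zero
        exact mul_ne_zero (mul_ne_zero h3Is hcsC) ha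
      have hw01ne : w0 - w1 ≠ 0 := by
        rw [hw01]
        exact mul_ne_zero (mul_ne_zero (mul_ne_zero two_ne_zero Complex.I_ne_zero) hsne) ha
      have hder : HasDerivAt w v0 ξ := by
        have := hana'.differentiableAt.hasDerivAt
        rwa [hv0'] at this
      have hslope : Tendsto (slope w ξ) (𝓝[≠] ξ) (𝓝 v0) :=
        hasDerivAt_iff_tendsto_slope.mp hder
      have hinv : Tendsto (fun z => (z - ξ) / (w z - w0)) (𝓝[≠] ξ) (𝓝 v0⁻¹) := by
        have h2 := hslope.inv₀ hv0ne
        apply h2.congr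
        intro z
        rw [slope_def_field, hw0', inv_div]
      have hwne0 : ∀ᶠ z in 𝓝[≠] ξ, w z - w0 ≠ 0 := by
        have h1 : ∀ᶠ z in 𝓝[≠] ξ, slope w ξ z ≠ 0 := hslope.eventually_ne hv0ne
        filter_upwards [h1] with z hz
        intro h0
        apply hz
        rw [slope_def_field, hw0', h0, zero_div]
      have hwne1 : ∀ᶠ z in 𝓝[≠] ξ, w z - w1 ≠ 0 := by
        have h2 : ∀ᶠ z in 𝓝 ξ, w z ≠ w1 :=
          hcw.tendsto.eventually_ne (show w ξ ≠ w1 by rw [hw0']; exact sub_ne_zero.mp hw01ne)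
        filter_upwards [h2.filter_mono nhdsWithin_le_nhds] with z hz
        exact sub_ne_zero.mpr hz
      -- limit of the auxiliary continuous part
      have hT2 : Tendsto (fun z => (6 * (csi:ℂ) * a^2 + (w z + 2*(ex:ℂ) + 3*a) * deriv w z)
          / (2 * (w z - w1))) (𝓝[≠] ξ)
          (𝓝 ((6 * (csi:ℂ) * a^2 + (w0 + 2*(ex:ℂ) + 3*a) * v0) / (2 * (w0 - w1)))) := by
        have hnum : ContinuousAt (fun z => 6 * (csi:ℂ) * a^2 + (w z + 2*(ex:ℂ) + 3*a) * deriv w z) ξ :=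
          continuousAt_const.add (((hcw.add continuousAt_const).add continuousAt_const).mul hcd)
        have hden2 : ContinuousAt (fun z => 2 * (w z - w1)) ξ :=
          continuousAt_const.mul (hcw.sub continuousAt_const)
        have hdv : (2 : ℂ) * (w ξ - w1) ≠ 0 := by
          rw [hw0']; exact mul_ne_zero two_ne_zero hw01ne
        have := (hnum.tendsto).div (hden2.tendsto) hdv
        rw [hw0', hv0'] at this
        exact this.mono_left nhdsWithin_le_nhds
      have hT1 : Tendsto (fun z => (z - ξ) * (csi:ℂ) / 2) (𝓝[≠] ξ) (𝓝 0) := by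
        have : ContinuousAt (fun z : ℂ => (z - ξ) * (csi:ℂ) / 2) ξ := by fun_prop
        have h2 := this.tendsto
        simp only [sub_self, zero_mul, zero_div] at h2
        exact h2.mono_left nhdsWithin_le_nhds
      have htot : Tendsto (fun z => (z - ξ) * (csi:ℂ) / 2
          - ((z - ξ) / (w z - w0)) * ((6 * (csi:ℂ) * a^2 + (w z + 2*(ex:ℂ) + 3*a) * deriv w z)
              / (2 * (w z - w1)))) (𝓝[≠] ξ)
          (𝓝 (0 - v0⁻¹ * ((6 * (csi:ℂ) * a^2 + (w0 + 2*(ex:ℂ) + 3*a) * v0) / (2 * (w0 - w1))))) :=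
        hT1.sub (hinv.mul hT2)
      have hval : 0 - v0⁻¹ * ((6 * (csi:ℂ) * a^2 + (w0 + 2*(ex:ℂ) + 3*a) * v0) / (2 * (w0 - w1)))
          = (-1 + Complex.I * s) / 2 := by
        rw [hv0def, hw01, hw0def]
        field_simp
        linear_combination (-7*a*s^2 + 2*Complex.I*s^3*a) * hI + (7*a - 2*Complex.I*s*a) * hs
      rw [← hval]
      apply htot.congr'
      filter_upwards [hwne0, hwne1, self_mem_nhdsWithin] with z h0 h1 hz
      have hzne : z - ξ ≠ 0 := sub_ne_zero.mpr hz
      have hdeq : (w z + 2*(ex:ℂ))^2 + 3*a^2 = (w z - w0) * (w z - w1) := hDen (w z)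
      rw [hdeq]
      field_simp
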